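/- Suppose ρ : (−∞,0) → (0,∞) is differentiable with ρ(t) → +∞ as t → −∞ and ρ(t) → 0 as t → 0⁻, and suppose the family γ^ρ(θ,t), defined by γ^ρ(θ,t)_{2j−1} = ρ(t)^{k_j²}cos(k_jθ) and γ^ρ(θ,t)_{2j} = ρ(t)^{k_j²}sin(k_jθ), satisfies ∂_tγ^ρ(θ,t) = ∂_θ²γ^ρ(θ,t)/|∂_θγ^ρ(θ,t)|² for all θ ∈ ℝ and t < 0. Then ∑_{j=1}^m ρ(t)^{2k_j²} = −2t for every t < 0; i.e., ρ coincides with the scale function r of the torus curve. -/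

import Mathlib

open Real Filter

lemma hasDerivAt_euclid {ι : Type*} [Fintype ι] {f : ℝ → EuclideanSpace ℝ ι}
    {f' : EuclideanSpace ℝ ι} {x : ℝ}
    (h : ∀ i, HasDerivAt (fun t => f t i) (f' i) x) : HasDerivAt f f' x := by
  have h1 : HasDerivAt (fun t => (fun i => f t i : ι → ℝ)) (fun i => f' i) x :=
    hasDerivAt_pi.2 h
  exact ((EuclideanSpace.equiv ι ℝ).symm.toContinuousLinearMap.hasFDerivAt).comp_hasDerivAt x h1

lemma euclid_norm_sq {ι : Type*} [Fintype ι] (x : EuclideanSpace ℝ ι) :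
    ‖x‖ ^ 2 = ∑ i, x i ^ 2 := by
  rw [EuclideanSpace.norm_eq, Real.sq_sqrt (by positivity)]
  simp [Real.norm_eq_abs, sq_abs]

lemma hd_cos (a kk x : ℝ) :
    HasDerivAt (fun y => a * Real.cos (kk * y)) (-(a * kk * Real.sin (kk * x))) x := by
  have h := (((hasDerivAt_id x).const_mul kk).cos).const_mul a
  refine h.congr_deriv ?_; simp only [id_eq]; ring

lemma hd_sin (a kk x : ℝ) :
    HasDerivAt (fun y => a * Real.sin (kk * y)) (a * kk * Real.cos (kk * x)) x := by
  have h := (((hasDerivAt_id x).const_mul kk).sin).const_mul a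
  refine h.congr_deriv ?_; simp only [id_eq]; ring



/-- Uniqueness of the scale function: if `ρ : (-∞,0) → (0,∞)` is differentiable with
`ρ(t) → +∞` as `t → -∞` and `ρ(t) → 0` as `t → 0⁻`, and the associated torus curve
`γ^ρ` satisfies the curve shortening flow equation `∂_t γ^ρ = ∂_θ² γ^ρ / |∂_θ γ^ρ|²`,
then `∑_j ρ(t)^(2 k_j²) = -2 t` for every `t < 0`, i.e. `ρ` coincides with the scale
function `r` of the torus curve. -/
theorem torus_scale_unique (m : ℕ) (hm : 1 ≤ m) (k : Fin m → ℕ)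
    (hkpos : ∀ j, 0 < k j) (hkmono : StrictMono k)
    (ρ : ℝ → ℝ)
    (hρpos : ∀ t < (0:ℝ), 0 < ρ t)
    (hρdiff : ∀ t < (0:ℝ), DifferentiableAt ℝ ρ t)
    (hρbot : Filter.Tendsto ρ Filter.atBot Filter.atTop)
    (hρzero : Filter.Tendsto ρ (nhdsWithin 0 (Set.Iio 0)) (nhds 0))
    (γ : ℝ → ℝ → EuclideanSpace ℝ (Fin m × Fin 2))
    (hγ : ∀ (θ t : ℝ) (j : Fin m),
      γ θ t (j, 0) = (ρ t) ^ ((k j) ^ 2) * Real.cos (k j * θ) ∧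
      γ θ t (j, 1) = (ρ t) ^ ((k j) ^ 2) * Real.sin (k j * θ))
    (hflow : ∀ (θ : ℝ), ∀ t < (0:ℝ),
      deriv (fun s => γ θ s) t
        = (‖deriv (fun θ' => γ θ' t) θ‖ ^ 2)⁻¹ •
            deriv (fun θ' => deriv (fun θ'' => γ θ'' t) θ') θ) :
    ∀ t < (0:ℝ), ∑ j : Fin m, (ρ t) ^ (2 * (k j) ^ 2) = -2 * t := by
  set F : ℝ → ℝ := fun s => ∑ j : Fin m, ρ s ^ (2 * (k j) ^ 2) with hFdef
  -- Step 1: F has derivative -2 everywhere on (-∞, 0)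
  have key : ∀ t < (0:ℝ), HasDerivAt F (-2) t := by
    intro t ht
    have hc : 0 < ρ t := hρpos t ht
    have hρd := (hρdiff t ht).hasDerivAt
    set L : ℝ := ∑ j : Fin m, (k j : ℝ) ^ 2 * ρ t ^ (2 * (k j) ^ 2) with hL
    have hLpos : 0 < L := by
      have : Nonempty (Fin m) := Fin.pos_iff_nonempty.mp hm
      refine Finset.sum_pos (fun j _ => ?_) Finset.univ_nonempty
      have := hkpos j
      positivity
    set e := (WithLp.equiv 2 (Fin m × Fin 2 → ℝ)).symm with he
    set D1 : ℝ → EuclideanSpace ℝ (Fin m × Fin 2) := fun θ' => e fun p =>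
      if p.2 = 0 then -(ρ t ^ (k p.1) ^ 2 * (k p.1) * Real.sin (k p.1 * θ'))
      else ρ t ^ (k p.1) ^ 2 * (k p.1) * Real.cos (k p.1 * θ') with hD1def
    have hD1 : ∀ θ', HasDerivAt (fun θ'' => γ θ'' t) (D1 θ') θ' := by
      intro θ'
      apply hasDerivAt_euclid
      rintro ⟨j, i⟩
      fin_cases i
      · have hfun : (fun θ'' => γ θ'' t (j, (0 : Fin 2)))
            = fun θ'' => ρ t ^ (k j) ^ 2 * Real.cos (k j * θ'') :=
          funext fun θ'' => (hγ θ'' t j).1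
        show HasDerivAt (fun θ'' => γ θ'' t (j, (0 : Fin 2)))
          (-(ρ t ^ (k j) ^ 2 * (k j) * Real.sin (k j * θ'))) θ'
        rw [hfun]
        exact hd_cos _ _ _
      · have hfun : (fun θ'' => γ θ'' t (j, (1 : Fin 2)))
            = fun θ'' => ρ t ^ (k j) ^ 2 * Real.sin (k j * θ'') :=
          funext fun θ'' => (hγ θ'' t j).2
        show HasDerivAt (fun θ'' => γ θ'' t (j, (1 : Fin 2)))
          (ρ t ^ (k j) ^ 2 * (k j) * Real.cos (k j * θ')) θ'
        rw [hfun]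
        exact hd_sin _ _ _
    set V2 : EuclideanSpace ℝ (Fin m × Fin 2) := e fun p =>
      if p.2 = 0 then -(ρ t ^ (k p.1) ^ 2 * (k p.1 : ℝ) ^ 2) else 0 with hV2def
    have hD2 : HasDerivAt D1 V2 0 := by
      apply hasDerivAt_euclid
      rintro ⟨j, i⟩
      fin_cases i
      · show HasDerivAt (fun θ' => -(ρ t ^ (k j) ^ 2 * (k j) * Real.sin (k j * θ')))
          (-(ρ t ^ (k j) ^ 2 * (k j : ℝ) ^ 2)) 0
        have h := (hd_sin (ρ t ^ (k j) ^ 2 * (k j)) (k j) 0).neg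
        refine h.congr_deriv ?_
        simp
        ring
      · show HasDerivAt (fun θ' => ρ t ^ (k j) ^ 2 * (k j) * Real.cos (k j * θ')) (0:ℝ) 0
        have h := hd_cos (ρ t ^ (k j) ^ 2 * (k j)) (k j) 0
        refine h.congr_deriv ?_
        simp
    have hnorm : ‖D1 0‖ ^ 2 = L := by
      rw [euclid_norm_sq, hL, Fintype.sum_prod_type]
      refine Finset.sum_congr rfl fun j _ => ?_
      rw [Fin.sum_univ_two]
      show (-(ρ t ^ (k j) ^ 2 * (k j) * Real.sin (k j * 0))) ^ 2
          + (ρ t ^ (k j) ^ 2 * (k j) * Real.cos (k j * 0)) ^ 2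
          = (k j : ℝ) ^ 2 * ρ t ^ (2 * (k j) ^ 2)
      rw [mul_comm 2 ((k j) ^ 2), pow_mul]
      simp
      ring
    set Vt : EuclideanSpace ℝ (Fin m × Fin 2) := e fun p =>
      if p.2 = 0 then (((k p.1) ^ 2 : ℕ) : ℝ) * ρ t ^ ((k p.1) ^ 2 - 1) * deriv ρ t * Real.cos (k p.1 * 0)
      else (((k p.1) ^ 2 : ℕ) : ℝ) * ρ t ^ ((k p.1) ^ 2 - 1) * deriv ρ t * Real.sin (k p.1 * 0) with hVtdef
    have hVt : HasDerivAt (fun s => γ 0 s) Vt t := by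
      apply hasDerivAt_euclid
      rintro ⟨j, i⟩
      fin_cases i
      · have hfun : (fun s => γ 0 s (j, (0 : Fin 2)))
            = fun s => ρ s ^ (k j) ^ 2 * Real.cos (k j * 0) :=
          funext fun s => (hγ 0 s j).1
        show HasDerivAt (fun s => γ 0 s (j, (0 : Fin 2)))
          ((((k j) ^ 2 : ℕ) : ℝ) * ρ t ^ ((k j) ^ 2 - 1) * deriv ρ t * Real.cos (k j * 0)) t
        rw [hfun]
        exact (hρd.pow _).mul_const _
      · have hfun : (fun s => γ 0 s (j, (1 : Fin 2)))
            = fun s => ρ s ^ (k j) ^ 2 * Real.sin (k j * 0) :=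
          funext fun s => (hγ 0 s j).2
        show HasDerivAt (fun s => γ 0 s (j, (1 : Fin 2)))
          ((((k j) ^ 2 : ℕ) : ℝ) * ρ t ^ ((k j) ^ 2 - 1) * deriv ρ t * Real.sin (k j * 0)) t
        rw [hfun]
        exact (hρd.pow _).mul_const _
    have hfl := hflow 0 t ht
    rw [hVt.deriv, (hD1 0).deriv, hnorm] at hfl
    have h2 : deriv (fun θ' => deriv (fun θ'' => γ θ'' t) θ') 0 = V2 := by
      have hfe : (fun θ' => deriv (fun θ'' => γ θ'' t) θ') = D1 :=
        funext fun θ' => (hD1 θ').deriv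
      rw [hfe]; exact hD2.deriv
    rw [h2] at hfl
    -- extract component (j0, 0)
    have hj0 : (0:ℕ) < m := hm
    set j0 : Fin m := ⟨0, hj0⟩ with hj0def
    have hcomp := congrArg (fun v : EuclideanSpace ℝ (Fin m × Fin 2) => v (j0, (0 : Fin 2))) hfl
    simp only [PiLp.smul_apply, smul_eq_mul] at hcomp
    have heq : (((k j0) ^ 2 : ℕ) : ℝ) * ρ t ^ ((k j0) ^ 2 - 1) * deriv ρ t * Real.cos (k j0 * 0)
        = L⁻¹ * (-(ρ t ^ (k j0) ^ 2 * (k j0 : ℝ) ^ 2)) := hcomp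
    have hn1 : 1 ≤ (k j0) ^ 2 := Nat.one_le_iff_ne_zero.mpr (pow_ne_zero 2 (hkpos j0).ne')
    have hsplit : ρ t ^ (k j0) ^ 2 = ρ t ^ ((k j0) ^ 2 - 1) * ρ t := by
      rw [← pow_succ, Nat.sub_add_cancel hn1]
    rw [hsplit] at heq
    simp only [mul_zero, Nat.cast_mul, Real.cos_zero, mul_one, Nat.cast_pow] at heq
    have hρ' : deriv ρ t = -(ρ t * L⁻¹) := by
      have hA : ((k j0 : ℝ) ^ 2 * ρ t ^ ((k j0) ^ 2 - 1)) ≠ 0 :=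
        mul_ne_zero (pow_ne_zero 2 (Nat.cast_pos.mpr (hkpos j0)).ne') (pow_ne_zero _ hc.ne')
      refine mul_left_cancel₀ hA ?_
      linear_combination heq
    -- derivative of F
    have hF' : HasDerivAt F (∑ j : Fin m, ((2 * (k j) ^ 2 : ℕ) : ℝ) * ρ t ^ (2 * (k j) ^ 2 - 1) * deriv ρ t) t := by
      rw [hFdef]
      exact HasDerivAt.fun_sum fun j _ => hρd.pow _
    have hval : (∑ j : Fin m, ((2 * (k j) ^ 2 : ℕ) : ℝ) * ρ t ^ (2 * (k j) ^ 2 - 1) * deriv ρ t) = -2 := by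
      rw [hρ']
      have hterm : ∀ j : Fin m, ((2 * (k j) ^ 2 : ℕ) : ℝ) * ρ t ^ (2 * (k j) ^ 2 - 1) * (-(ρ t * L⁻¹))
          = (-(2 * L⁻¹)) * ((k j : ℝ) ^ 2 * ρ t ^ (2 * (k j) ^ 2)) := by
        intro j
        have h1 : ρ t ^ (2 * (k j) ^ 2) = ρ t ^ (2 * (k j) ^ 2 - 1) * ρ t := by
          rw [← pow_succ, Nat.sub_add_cancel (Nat.mul_pos two_pos (pow_pos (hkpos j) 2))]
        rw [h1]; push_cast; ring
      rw [Finset.sum_congr rfl fun j _ => hterm j, ← Finset.mul_sum, ← hL]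
      field_simp
    exact hval ▸ hF'
  -- Step 2: F tends to 0 at 0⁻
  have hFlim : Tendsto F (nhdsWithin 0 (Set.Iio 0)) (nhds 0) := by
    rw [hFdef]
    have hterm : ∀ j : Fin m, Tendsto (fun s => ρ s ^ (2 * (k j) ^ 2))
        (nhdsWithin 0 (Set.Iio 0)) (nhds 0) := by
      intro j
      have hne : 2 * (k j) ^ 2 ≠ 0 := (Nat.mul_pos two_pos (pow_pos (hkpos j) 2)).ne'
      have := hρzero.pow (2 * (k j) ^ 2)
      rwa [zero_pow hne] at this
    have h := tendsto_finset_sum (Finset.univ : Finset (Fin m)) fun j _ => hterm j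
    simpa using h
  -- Step 3: conclude
  have hH : ∀ s < (0:ℝ), HasDerivAt (fun u => F u + 2 * u) 0 s := by
    intro s hs
    have h := (key s hs).add ((hasDerivAt_id s).const_mul 2)
    refine h.congr_deriv ?_
    simp
  have hconst : ∀ a < (0:ℝ), ∀ b < (0:ℝ), a < b → F a + 2 * a = F b + 2 * b := by
    intro a ha b hb hab
    obtain ⟨c, hc, hc2⟩ := exists_hasDerivAt_eq_slope (fun u => F u + 2 * u) (fun _ => 0) hab
      (fun x hx => ((hH x (lt_of_le_of_lt hx.2 hb)).continuousAt).continuousWithinAt)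
      (fun x hx => hH x (hx.2.trans hb))
    have hba : b - a ≠ 0 := sub_ne_zero.mpr hab.ne'
    field_simp at hc2
    linarith
  intro t ht
  have hconst' : ∀ s < (0:ℝ), F s + 2 * s = F t + 2 * t := by
    intro s hs
    rcases lt_trichotomy s t with h | h | h
    · exact hconst s hs t ht h
    · rw [h]
    · exact (hconst t ht s hs h).symm
  have h1 : Tendsto (fun s => F s + 2 * s) (nhdsWithin 0 (Set.Iio 0)) (nhds (F t + 2 * t)) := by
    refine Tendsto.congr' ?_ tendsto_const_nhds
    filter_upwards [self_mem_nhdsWithin] with s hs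
    exact (hconst' s hs).symm
  have h2 : Tendsto (fun s : ℝ => F s + 2 * s) (nhdsWithin 0 (Set.Iio 0)) (nhds 0) := by
    have h2b : Tendsto (fun s : ℝ => 2 * s) (nhdsWithin 0 (Set.Iio 0)) (nhds 0) := by
      have hc2 : Continuous (fun s : ℝ => 2 * s) := continuous_const.mul continuous_id
      have h3 := (hc2.tendsto 0).mono_left (nhdsWithin_le_nhds (s := Set.Iio 0))
      simpa using h3
    simpa using hFlim.add h2b
  have hu := tendsto_nhds_unique h1 h2
  linarith
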